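/- Under the hypotheses of the perturbed-system invariance theorem (|∂f/∂u| ≤ 1, |∂f/∂x| ≤ θ|g'| with θ < 1, |u(t)| ≤ κ), the g-scaled incremental mean volatility of x is bounded: limsup_{T→∞} (1/T) Σ_{t=1}^{T} |g(x(t+1)) − g(x(t))| ≤ 2κ/(1−θ). -/

import Mathlib

open Filter Finset

lemma mono_deriv_nonneg' {g : ℝ → ℝ} (hgm : Monotone g) {x : ℝ}
    (hd : DifferentiableAt ℝ g x) : 0 ≤ deriv g x := by
  have h := hd.hasDerivAt
  rw [hasDerivAt_iff_tendsto_slope] at h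
  have h2 : Tendsto (slope g x) (nhdsWithin x (Set.Ioi x)) (nhds (deriv g x)) :=
    h.mono_left (nhdsWithin_mono x (fun y hy => ne_of_gt hy))
  refine ge_of_tendsto h2 ?_
  filter_upwards [self_mem_nhdsWithin] with y hy
  have : x < y := hy
  rw [slope_def_field]
  exact div_nonneg (sub_nonneg.2 (hgm this.le)) (sub_nonneg.2 this.le)

lemma key_mono {θ : ℝ} (hθ : 0 ≤ θ) {g h : ℝ → ℝ} (hg : Differentiable ℝ g)
    (hh : Differentiable ℝ h) (hbd : ∀ x, |deriv h x| ≤ θ * |deriv g x|)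
    (hgm : Monotone g) (a b : ℝ) (hab : a ≤ b) :
    |h b - h a| ≤ θ * (g b - g a) := by
  have hd : ∀ x, |deriv h x| ≤ θ * deriv g x := by
    intro x
    have := hbd x
    rwa [abs_of_nonneg (mono_deriv_nonneg' hgm (hg x))] at this
  have h1 : Monotone (fun s => θ * g s - h s) := by
    apply monotone_of_deriv_nonneg ((hg.const_mul θ).sub hh)
    intro x
    rw [deriv_sub ((hg x).const_mul θ) (hh x), deriv_const_mul θ (hg x)]
    have := abs_le.1 (hd x)
    linarith [this.2]
  have h2 : Monotone (fun s => θ * g s + h s) := by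
    apply monotone_of_deriv_nonneg ((hg.const_mul θ).add hh)
    intro x
    rw [deriv_add ((hg x).const_mul θ) (hh x), deriv_const_mul θ (hg x)]
    have := abs_le.1 (hd x)
    linarith [this.1]
  have e1 := h1 hab
  have e2 := h2 hab
  simp only at e1 e2
  rw [abs_sub_le_iff]
  constructor <;> linarith

lemma key {θ : ℝ} (hθ : 0 ≤ θ) {g h : ℝ → ℝ} (hg : Differentiable ℝ g)
    (hh : Differentiable ℝ h) (hbd : ∀ x, |deriv h x| ≤ θ * |deriv g x|)
    (hgm : Monotone g ∨ Antitone g) (a b : ℝ) :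
    |h b - h a| ≤ θ * |g b - g a| := by
  have main : ∀ (g : ℝ → ℝ), Differentiable ℝ g →
      (∀ x, |deriv h x| ≤ θ * |deriv g x|) → Monotone g →
      |h b - h a| ≤ θ * |g b - g a| := by
    intro g hg hbd hgm
    rcases le_total a b with hab | hab
    · have := key_mono hθ hg hh hbd hgm a b hab
      rwa [abs_of_nonneg (sub_nonneg.2 (hgm hab))]
    · have := key_mono hθ hg hh hbd hgm b a hab
      rw [abs_sub_comm (h b), abs_sub_comm (g b), abs_of_nonneg (sub_nonneg.2 (hgm hab))]
      exact this
  rcases hgm with hm | ha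
  · exact main g hg hbd hm
  · have hneg : Differentiable ℝ (fun s => -g s) := hg.neg
    have hbd' : ∀ x, |deriv h x| ≤ θ * |deriv (fun s => -g s) x| := by
      intro x
      have : deriv (fun s => -g s) x = -deriv g x := deriv.neg
      rw [this, abs_neg]
      exact hbd x
    have hm : Monotone (fun s => -g s) := fun p q hpq => neg_le_neg (ha hpq)
    have := main (fun s => -g s) hneg hbd' hm
    have e : |(-g b) - (-g a)| = |g b - g a| := by rw [neg_sub_neg, abs_sub_comm]
    rwa [e] at this

lemma ukey {κ : ℝ} (hκ : 0 < κ) {k : ℝ → ℝ} (hk : Differentiable ℝ k)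
    (hbd : ∀ v : ℝ, |v| ≤ κ → |deriv k v| ≤ 1) {p q : ℝ}
    (hp : |p| ≤ κ) (hq : |q| ≤ κ) : |k p - k q| ≤ 2 * κ := by
  have hs : Convex ℝ (Set.Icc (-κ) κ) := convex_Icc _ _
  have hder : ∀ v ∈ Set.Icc (-κ) κ, HasDerivWithinAt k (deriv k v) (Set.Icc (-κ) κ) v :=
    fun v _ => (hk v).hasDerivAt.hasDerivWithinAt
  have hbd' : ∀ v ∈ Set.Icc (-κ) κ, ‖deriv k v‖ ≤ 1 := by
    intro v hv
    exact hbd v (abs_le.2 ⟨hv.1, hv.2⟩)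
  have hpm : p ∈ Set.Icc (-κ) κ := by rw [Set.mem_Icc]; exact abs_le.1 hp
  have hqm : q ∈ Set.Icc (-κ) κ := by rw [Set.mem_Icc]; exact abs_le.1 hq
  have := hs.norm_image_sub_le_of_norm_hasDerivWithin_le hder hbd' hqm hpm
  simp only [Real.norm_eq_abs, one_mul] at this
  calc |k p - k q| ≤ |p - q| := this
    _ ≤ |p| + |q| := abs_sub _ _
    _ ≤ 2 * κ := by linarith

/-- under the perturbed-system hypotheses (`|∂f/∂u| ≤ 1`,
`|∂f/∂x| ≤ θ|g'|`, `θ < 1`, `|u(t)| ≤ κ`), the `g`-scaled incremental mean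
volatility of `x` is at most `2κ/(1−θ)`. -/
theorem stmt_11 (g : ℝ → ℝ) (f : ℝ → ℝ → ℝ) (θ κ : ℝ)
    (hg : ContDiff ℝ 1 g) (hgmono : Monotone g ∨ Antitone g)
    (hf : ContDiff ℝ 1 (fun p : ℝ × ℝ => f p.1 p.2))
    (hκ : 0 < κ) (hθ0 : 0 ≤ θ) (hθ1 : θ < 1)
    (hdu : ∀ x u : ℝ, |u| ≤ κ → |deriv (fun u' => f x u') u| ≤ 1)
    (hdx : ∀ x u : ℝ, |u| ≤ κ → |deriv (fun x' => f x' u) x| ≤ θ * |deriv g x|)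
    (x u : ℕ → ℝ) (hu : ∀ t, |u t| ≤ κ)
    (htraj : ∀ t, g (x (t + 1)) = f (x t) (u t)) :
    Filter.limsup
        (fun T : ℕ => (1 / (T : ℝ)) * ∑ t ∈ Finset.Icc 1 T, |g (x (t + 1)) - g (x t)|)
        atTop
      ≤ 2 * κ / (1 - θ) := by
  have hθ' : 0 < 1 - θ := by linarith
  set c : ℝ := 2 * κ / (1 - θ) with hc
  have hc0 : 0 ≤ c := div_nonneg (by linarith) hθ'.le
  have hcrec : θ * c + 2 * κ = c := by
    have h := div_mul_cancel₀ (2 * κ) hθ'.ne'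
    rw [← hc] at h
    linear_combination -h
  have hF : Differentiable ℝ (fun p : ℝ × ℝ => f p.1 p.2) := hf.differentiable one_ne_zero
  have hdiffx : ∀ v : ℝ, Differentiable ℝ (fun x' => f x' v) := fun v =>
    hF.comp (differentiable_id.prodMk (differentiable_const v))
  have hdiffu : ∀ w : ℝ, Differentiable ℝ (fun u' => f w u') := fun w =>
    hF.comp ((differentiable_const w).prodMk differentiable_id)
  have hgdiff : Differentiable ℝ g := hg.differentiable one_ne_zero
  set D : ℕ → ℝ := fun t => |g (x (t + 1)) - g (x t)| with hD
  have hD0 : ∀ t, 0 ≤ D t := fun t => abs_nonneg _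
  -- one-step recurrence
  have hstep : ∀ t, D (t + 1) ≤ θ * D t + 2 * κ := by
    intro t
    have e1 : g (x (t + 2)) = f (x (t + 1)) (u (t + 1)) := htraj (t + 1)
    have e2 : g (x (t + 1)) = f (x t) (u t) := htraj t
    have h1 : |f (x (t + 1)) (u (t + 1)) - f (x (t + 1)) (u t)| ≤ 2 * κ :=
      ukey hκ (hdiffu (x (t + 1))) (fun v hv => hdu (x (t + 1)) v hv) (hu (t + 1)) (hu t)
    have h2 : |f (x (t + 1)) (u t) - f (x t) (u t)| ≤ θ * |g (x (t + 1)) - g (x t)| :=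
      key hθ0 hgdiff (hdiffx (u t)) (fun z => hdx z (u t) (hu t)) hgmono (x t) (x (t + 1))
    have hDsucc : D (t + 1) = |f (x (t + 1)) (u (t + 1)) - f (x t) (u t)| := by
      simp only [hD]
      rw [show t + 1 + 1 = t + 2 from rfl, e1, e2]
    rw [hDsucc]
    calc |f (x (t + 1)) (u (t + 1)) - f (x t) (u t)|
        ≤ |f (x (t + 1)) (u (t + 1)) - f (x (t + 1)) (u t)| +
          |f (x (t + 1)) (u t) - f (x t) (u t)| := abs_sub_le _ _ _
      _ ≤ 2 * κ + θ * |g (x (t + 1)) - g (x t)| := add_le_add h1 h2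
      _ = θ * D t + 2 * κ := by simp only [hD]; ring
  -- geometric decay
  have hgeom : ∀ t, D t ≤ θ ^ t * D 0 + c := by
    intro t
    induction t with
    | zero => simp; linarith [hD0 0]
    | succ n ih =>
      have := hstep n
      have h2 : θ * D n ≤ θ * (θ ^ n * D 0 + c) := mul_le_mul_of_nonneg_left ih hθ0
      calc D (n + 1) ≤ θ * D n + 2 * κ := this
        _ ≤ θ * (θ ^ n * D 0 + c) + 2 * κ := by linarith
        _ = θ ^ (n + 1) * D 0 + (θ * c + 2 * κ) := by ring
        _ = θ ^ (n + 1) * D 0 + c := by rw [hcrec]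
  -- geometric series bound
  have hsumgeom : ∀ T : ℕ, ∑ t ∈ Finset.Icc 1 T, θ ^ t ≤ 1 / (1 - θ) := by
    intro T
    have hsub : Finset.Icc 1 T ⊆ Finset.range (T + 1) := by
      intro a ha
      simp only [Finset.mem_Icc] at ha
      simp only [Finset.mem_range]
      omega
    have h1 : ∑ t ∈ Finset.Icc 1 T, θ ^ t ≤ ∑ t ∈ Finset.range (T + 1), θ ^ t :=
      Finset.sum_le_sum_of_subset_of_nonneg hsub (fun i _ _ => pow_nonneg hθ0 i)
    have h2 : ∑ t ∈ Finset.range (T + 1), θ ^ t = (1 - θ ^ (T + 1)) / (1 - θ) := by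
      rw [geom_sum_eq (by linarith : θ ≠ 1)]
      rw [div_eq_div_iff (by linarith) (by linarith : (1:ℝ) - θ ≠ 0)]
      ring
    have h3 : (1 - θ ^ (T + 1)) / (1 - θ) ≤ 1 / (1 - θ) := by
      gcongr
      linarith [pow_nonneg hθ0 (T + 1)]
    linarith
  -- sum bound
  have hsum : ∀ T : ℕ, ∑ t ∈ Finset.Icc 1 T, D t ≤ D 0 * (1 / (1 - θ)) + T * c := by
    intro T
    calc ∑ t ∈ Finset.Icc 1 T, D t ≤ ∑ t ∈ Finset.Icc 1 T, (θ ^ t * D 0 + c) :=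
          Finset.sum_le_sum (fun i _ => hgeom i)
      _ = (∑ t ∈ Finset.Icc 1 T, θ ^ t) * D 0 + (Finset.Icc 1 T).card * c := by
          rw [Finset.sum_add_distrib, Finset.sum_const, ← Finset.sum_mul, nsmul_eq_mul]
      _ ≤ (1 / (1 - θ)) * D 0 + T * c := by
          rw [Nat.card_Icc]
          simp only [Nat.add_sub_cancel]
          have := mul_le_mul_of_nonneg_right (hsumgeom T) (hD0 0)
          linarith
      _ = D 0 * (1 / (1 - θ)) + T * c := by ring
  set M : ℝ := D 0 * (1 / (1 - θ)) with hM
  set a : ℕ → ℝ := fun T => (1 / (T : ℝ)) * ∑ t ∈ Finset.Icc 1 T, |g (x (t + 1)) - g (x t)|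
    with ha
  have haD : ∀ T, a T = (1 / (T : ℝ)) * ∑ t ∈ Finset.Icc 1 T, D t := fun T => rfl
  have ha0 : ∀ T, 0 ≤ a T := by
    intro T
    rw [haD]
    apply mul_nonneg (by positivity)
    exact Finset.sum_nonneg fun i _ => hD0 i
  have hev : ∀ᶠ T in atTop, a T ≤ c + M * (1 / (T : ℝ)) := by
    filter_upwards [eventually_ge_atTop 1] with T hT
    have hT0 : (0 : ℝ) < (T : ℝ) := by exact_mod_cast Nat.lt_of_lt_of_le Nat.zero_lt_one hT
    rw [haD]
    have h1 := hsum T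
    have h2 : (1 / (T : ℝ)) * (∑ t ∈ Finset.Icc 1 T, D t) ≤ (1 / (T : ℝ)) * (M + T * c) :=
      mul_le_mul_of_nonneg_left h1 (by positivity)
    have h3 : (1 / (T : ℝ)) * (M + T * c) = c + M * (1 / (T : ℝ)) := by
      field_simp
      ring
    linarith
  have hlim : Tendsto (fun T : ℕ => c + M * (1 / (T : ℝ))) atTop (nhds c) := by
    have h := (tendsto_one_div_atTop_nhds_zero_nat.const_mul M).const_add c
    simpa using h
  calc limsup a atTop ≤ limsup (fun T : ℕ => c + M * (1 / (T : ℝ))) atTop := by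
        exact limsup_le_limsup hev (isCoboundedUnder_le_of_le atTop ha0)
          hlim.isBoundedUnder_le
    _ = c := hlim.limsup_eq
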